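/- With A an n×n stable matrix, B an n×1, C a 1×n, R_x = ∫_x^∞ e^{-yA} B C e^{-yA} dy, and T_λ(x,x) = −λ C e^{-xA}(I + λR_x)^{-1} e^{-xA} B (assuming I + λR_x invertible for all x in an interval), one has T_λ(x,x) = (d/dx) log det(I + λ R_x). -/

import Mathlib

open MeasureTheory Matrix NormedSpace Set

open Filter Asymptotics

lemma aux_pow_exp (m : ℕ) {r δ : ℝ} (h : δ < r) :
    (fun y : ℝ => y ^ m * Real.exp (-r * y)) =O[atTop] fun y => Real.exp (-δ * y) := by
  have h1 : (fun y : ℝ => y ^ m) =o[atTop] fun y => Real.exp ((r - δ) * y) :=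
    isLittleO_pow_exp_pos_mul_atTop m (by linarith)
  have h2 := h1.isBigO.mul (isBigO_refl (fun y : ℝ => Real.exp (-r * y)) atTop)
  refine h2.congr' (EventuallyEq.refl _ _) ?_
  filter_upwards with y
  rw [← Real.exp_add]
  congr 1
  ring

lemma exp_smul_one (c : ℂ) (n : ℕ) :
    exp (c • (1 : Matrix (Fin n) (Fin n) ℂ)) = Complex.exp c • (1 : Matrix (Fin n) (Fin n) ℂ) := by
  letI : SeminormedRing (Matrix (Fin n) (Fin n) ℂ) := Matrix.linftyOpSemiNormedRing
  letI : NormedRing (Matrix (Fin n) (Fin n) ℂ) := Matrix.linftyOpNormedRing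
  letI : NormedAlgebra ℂ (Matrix (Fin n) (Fin n) ℂ) := Matrix.linftyOpNormedAlgebra
  have h1 : c • (1 : Matrix (Fin n) (Fin n) ℂ) = Matrix.diagonal (fun _ => c) := by
    ext i j; simp [Matrix.diagonal, Matrix.one_apply]
  have h2 : Complex.exp c • (1 : Matrix (Fin n) (Fin n) ℂ)
      = Matrix.diagonal (fun _ => Complex.exp c) := by
    ext i j; simp [Matrix.diagonal, Matrix.one_apply]
  rw [h1, h2, Matrix.exp_diagonal, Complex.exp_eq_exp_ℂ]
  congr 1
  funext i
  exact congr_fun (Pi.exp_def _) i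

lemma exp_mulVec_of_pow_eq_zero {n : ℕ} (N : Matrix (Fin n) (Fin n) ℂ) (v : Fin n → ℂ)
    (k : ℕ) (hk : (N ^ k) *ᵥ v = 0) (c : ℂ) :
    exp (c • N) *ᵥ v
      = ∑ m ∈ Finset.range k, ((m.factorial : ℂ)⁻¹ * c ^ m) • ((N ^ m) *ᵥ v) := by
  letI : SeminormedRing (Matrix (Fin n) (Fin n) ℂ) := Matrix.linftyOpSemiNormedRing
  letI : NormedRing (Matrix (Fin n) (Fin n) ℂ) := Matrix.linftyOpNormedRing
  letI : NormedAlgebra ℂ (Matrix (Fin n) (Fin n) ℂ) := Matrix.linftyOpNormedAlgebra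
  let T : Matrix (Fin n) (Fin n) ℂ →ₗ[ℂ] (Fin n → ℂ) :=
    { toFun := fun M => M *ᵥ v
      map_add' := fun M₁ M₂ => Matrix.add_mulVec M₁ M₂ v
      map_smul' := fun c M => Matrix.smul_mulVec c M v }
  have hTcont : Continuous T := T.continuous_of_finiteDimensional
  have hsum : Summable fun m : ℕ => ((m.factorial : ℂ)⁻¹) • (c • N) ^ m :=
    expSeries_summable' (c • N)
  have h1 : exp (c • N) *ᵥ v
      = ∑' m : ℕ, T (((m.factorial : ℂ)⁻¹) • (c • N) ^ m) := by
    rw [exp_eq_tsum (𝕂 := ℂ)]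
    exact ((hsum.hasSum.mapL (LinearMap.toContinuousLinearMap T)).tsum_eq).symm
  rw [h1]
  have h2 : ∀ m : ℕ, T (((m.factorial : ℂ)⁻¹) • (c • N) ^ m)
      = ((m.factorial : ℂ)⁻¹ * c ^ m) • ((N ^ m) *ᵥ v) := by
    intro m
    show (((m.factorial : ℂ)⁻¹) • (c • N) ^ m) *ᵥ v = _
    rw [smul_pow, smul_smul, ← smul_smul]
    simp [Matrix.smul_mulVec, smul_smul]
  rw [tsum_congr h2]
  refine tsum_eq_sum ?_
  intro m hm
  have hmk : k ≤ m := by simpa using hm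
  have : (N : Matrix (Fin n) (Fin n) ℂ) ^ m *ᵥ v = 0 := by
    have : N ^ m = N ^ (m - k) * N ^ k := by
      rw [← pow_add]
      congr 1
      omega
    rw [this, ← Matrix.mulVec_mulVec, hk, Matrix.mulVec_zero]
  rw [this, smul_zero]

lemma expDecayVec {n : ℕ} (A : Matrix (Fin n) (Fin n) ℂ)
    (hA : ∀ μ ∈ spectrum ℂ A, 0 < μ.re) :
    ∃ δ : ℝ, 0 < δ ∧ ∀ v : Fin n → ℂ,
      (fun y : ℝ => exp ((-(y : ℂ)) • A) *ᵥ v) =O[atTop] fun y => Real.exp (-δ * y) := by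
  have hfin : (spectrum ℂ A).Finite := A.finite_spectrum
  have hδex : ∃ δ : ℝ, 0 < δ ∧ ∀ μ ∈ spectrum ℂ A, δ < μ.re := by
    set T := hfin.toFinset with hT
    by_cases hTne : T.Nonempty
    · refine ⟨(T.inf' hTne fun μ => μ.re) / 2, ?_, ?_⟩
      · have : 0 < T.inf' hTne fun μ => μ.re := by
          rw [Finset.lt_inf'_iff]
          intro μ hμ
          exact hA μ (hfin.mem_toFinset.mp hμ)
        linarith
      · intro μ hμ
        have h1 : (T.inf' hTne fun μ => μ.re) ≤ μ.re :=
          Finset.inf'_le _ (hfin.mem_toFinset.mpr hμ)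
        have : 0 < T.inf' hTne fun μ => μ.re := by
          rw [Finset.lt_inf'_iff]
          intro μ hμ
          exact hA μ (hfin.mem_toFinset.mp hμ)
        linarith
    · refine ⟨1, one_pos, fun μ hμ => ?_⟩
      exact absurd ⟨μ, hfin.mem_toFinset.mpr hμ⟩ hTne
  obtain ⟨δ, hδpos, hδlt⟩ := hδex
  refine ⟨δ, hδpos, fun v => ?_⟩
  have htop := Module.End.iSup_maxGenEigenspace_eq_top (Matrix.toLinAlgEquiv' A)
  have hv : v ∈ ⨆ μ : ℂ, Module.End.maxGenEigenspace (Matrix.toLinAlgEquiv' A) μ := by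
    rw [htop]; trivial
  induction hv using Submodule.iSup_induction' with
  | zero =>
    simpa only [Matrix.mulVec_zero] using
      (isBigO_zero (E' := Fin n → ℂ) (fun y : ℝ => Real.exp (-δ * y)) atTop)
  | add x y hx hy hCx hCy =>
    simpa only [Matrix.mulVec_add] using hCx.add hCy
  | mem μ w hw =>
    by_cases hw0 : w = 0
    · subst hw0
      simpa only [Matrix.mulVec_zero] using
        (isBigO_zero (E' := Fin n → ℂ) (fun y : ℝ => Real.exp (-δ * y)) atTop)
    have hμspec : μ ∈ spectrum ℂ A := by
      have h1 : Module.End.HasUnifEigenvector (Matrix.toLinAlgEquiv' A) μ ⊤ w := ⟨hw, hw0⟩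
      have h2 := Module.End.HasUnifEigenvector.hasUnifEigenvalue h1
      have h3 : Module.End.HasUnifEigenvalue (Matrix.toLinAlgEquiv' A) μ 1 :=
        (Module.End.hasUnifEigenvalue_iff_hasUnifEigenvalue_one (by norm_num)).mp h2
      have h4 := Module.End.hasUnifEigenvalue_iff_mem_spectrum.mp h3
      rwa [AlgEquiv.spectrum_eq] at h4
    obtain ⟨k, hk⟩ := (Module.End.mem_maxGenEigenspace _ _ _).mp hw
    set N : Matrix (Fin n) (Fin n) ℂ := A - μ • 1 with hN
    have hNk : (N ^ k) *ᵥ w = 0 := by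
      have h5 : Matrix.toLinAlgEquiv' N
          = Matrix.toLinAlgEquiv' A - μ • (1 : Module.End ℂ (Fin n → ℂ)) := by
        rw [hN, map_sub]
        congr 1
        rw [← Algebra.algebraMap_eq_smul_one, AlgEquiv.commutes,
          Algebra.algebraMap_eq_smul_one]
      have h6 : Matrix.toLinAlgEquiv' (N ^ k) w = 0 := by
        rw [map_pow, h5]; exact hk
      rwa [Matrix.toLinAlgEquiv'_apply] at h6
    have heq : ∀ y : ℝ, exp ((-(y : ℂ)) • A) *ᵥ w
        = ∑ m ∈ Finset.range k,
            (Complex.exp ((-(y : ℂ)) * μ) * ((m.factorial : ℂ)⁻¹ * (-(y : ℂ)) ^ m)) •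
              ((N ^ m) *ᵥ w) := by
      intro y
      have hsplit : (-(y : ℂ)) • A
          = ((-(y : ℂ)) * μ) • (1 : Matrix (Fin n) (Fin n) ℂ) + (-(y : ℂ)) • N := by
        rw [hN, smul_sub, mul_smul]
        abel
      have hcomm : Commute (((-(y : ℂ)) * μ) • (1 : Matrix (Fin n) (Fin n) ℂ))
          ((-(y : ℂ)) • N) := ((Commute.one_left _).smul_left _).smul_right _
      rw [hsplit, Matrix.exp_add_of_commute _ _ hcomm, exp_smul_one,
        smul_mul_assoc, one_mul, Matrix.smul_mulVec,
        exp_mulVec_of_pow_eq_zero N w k hNk, Finset.smul_sum]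
      refine Finset.sum_congr rfl fun m _ => ?_
      rw [smul_smul]
    have hBO : ∀ m ∈ Finset.range k,
        (fun y : ℝ =>
          (Complex.exp ((-(y : ℂ)) * μ) * ((m.factorial : ℂ)⁻¹ * (-(y : ℂ)) ^ m)) •
            ((N ^ m) *ᵥ w)) =O[atTop] fun y => Real.exp (-δ * y) := by
      intro m _
      have h3 : (fun y : ℝ => y ^ m * Real.exp (-μ.re * y)) =O[atTop]
          fun y => Real.exp (-δ * y) := aux_pow_exp m (hδlt μ hμspec)
      refine IsBigO.trans ?_ h3
      refine IsBigO.of_bound ‖(N ^ m) *ᵥ w‖ ?_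
      filter_upwards [eventually_ge_atTop (0 : ℝ)] with y hy
      rw [norm_smul]
      have habs : ‖Complex.exp ((-(y : ℂ)) * μ) * ((m.factorial : ℂ)⁻¹ * (-(y : ℂ)) ^ m)‖
          ≤ y ^ m * Real.exp (-μ.re * y) := by
        rw [norm_mul, norm_mul, norm_pow, Complex.norm_exp]
        have h7 : ((-(y : ℂ)) * μ).re = -μ.re * y := by
          simp [Complex.mul_re]
          ring
        rw [h7]
        have h8 : ‖(-(y : ℂ))‖ = y := by
          rw [norm_neg, Complex.norm_real, Real.norm_eq_abs, abs_of_nonneg hy]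
        rw [h8]
        have h9 : ‖((m.factorial : ℂ))⁻¹‖ ≤ 1 := by
          rw [norm_inv]
          simp only [Complex.norm_natCast]
          exact inv_le_one_of_one_le₀ (by exact_mod_cast m.factorial_pos)
        calc Real.exp (-μ.re * y) * (‖((m.factorial : ℂ))⁻¹‖ * y ^ m)
            ≤ Real.exp (-μ.re * y) * (1 * y ^ m) := by
              apply mul_le_mul_of_nonneg_left
              apply mul_le_mul_of_nonneg_right h9 (pow_nonneg hy m)
              positivity
          _ = y ^ m * Real.exp (-μ.re * y) := by ring
      have h10 : ‖y ^ m * Real.exp (-μ.re * y)‖ = y ^ m * Real.exp (-μ.re * y) := by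
        rw [Real.norm_eq_abs, abs_of_nonneg (by positivity)]
      rw [h10]
      calc ‖Complex.exp ((-(y : ℂ)) * μ) * ((m.factorial : ℂ)⁻¹ * (-(y : ℂ)) ^ m)‖ * ‖(N ^ m) *ᵥ w‖
          ≤ (y ^ m * Real.exp (-μ.re * y)) * ‖(N ^ m) *ᵥ w‖ :=
            mul_le_mul_of_nonneg_right habs (norm_nonneg _)
        _ = ‖(N ^ m) *ᵥ w‖ * (y ^ m * Real.exp (-μ.re * y)) := by ring
    have := IsBigO.sum hBO
    exact (isBigO_congr (EventuallyEq.of_eq (funext heq)) (EventuallyEq.refl _ _)).mpr (by simpa only [Finset.sum_fn] using this)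


lemma integrableOn_of_bigO (φ : ℝ → ℂ) (hc : Continuous φ) {δ : ℝ} (hδ : 0 < δ)
    (hO : φ =O[atTop] fun y => Real.exp (-δ * y)) (t : ℝ) :
    IntegrableOn φ (Ioi t) := by
  obtain ⟨C, hCpos, hC⟩ := hO.exists_pos
  rw [IsBigOWith, eventually_atTop] at hC
  obtain ⟨y₀, hy₀⟩ := hC
  set s := max t y₀ with hs
  have h1 : IntegrableOn φ (Ioc t s) := hc.integrableOn_Ioc
  have h2 : IntegrableOn φ (Ioi s) := by
    refine Integrable.mono' (g := fun y => C * Real.exp (-δ * y))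
      ((exp_neg_integrableOn_Ioi s hδ).const_mul C)
      hc.aestronglyMeasurable.restrict ?_
    rw [ae_restrict_iff' measurableSet_Ioi]
    filter_upwards with y hy
    have := hy₀ y (le_trans (le_max_right t y₀) (le_of_lt hy))
    calc ‖φ y‖ ≤ C * ‖Real.exp (-δ * y)‖ := this
      _ = C * Real.exp (-δ * y) := by rw [Real.norm_eq_abs, abs_of_pos (Real.exp_pos _)]
  have h3 : Ioi t ⊆ Ioc t s ∪ Ioi s := by
    intro y hy
    rcases le_or_gt y s with h | h
    · exact Or.inl ⟨hy, h⟩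
    · exact Or.inr h
  exact (h1.union h2).mono_set h3

lemma hasDerivAt_integral_Ioi (φ : ℝ → ℂ) (hc : Continuous φ)
    (hint : ∀ t : ℝ, IntegrableOn φ (Ioi t)) (x : ℝ) :
    HasDerivAt (fun u => ∫ y in Ioi u, φ y) (-φ x) x := by
  have key : ∀ u ∈ Ioi (x - 1),
      ∫ y in Ioi u, φ y = (∫ y in Ioi (x - 1), φ y) - ∫ y in (x - 1)..u, φ y := by
    intro u hu
    have hle : x - 1 ≤ u := le_of_lt hu
    rw [intervalIntegral.integral_of_le hle]
    have hsplit : Ioi (x - 1) = Ioc (x - 1) u ∪ Ioi u := (Ioc_union_Ioi_eq_Ioi hle).symm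
    have := setIntegral_union (Ioc_disjoint_Ioi le_rfl) measurableSet_Ioi
      ((hint (x - 1)).mono_set Ioc_subset_Ioi_self) (hint u) (f := φ) (μ := volume)
    rw [← hsplit] at this
    rw [this]
    ring
  have hInt : IntervalIntegrable φ volume (x - 1) x := by
    rw [intervalIntegrable_iff_integrableOn_Ioc_of_le (by linarith)]
    exact (hint (x - 1)).mono_set Ioc_subset_Ioi_self
  have hd : HasDerivAt (fun u => (∫ y in Ioi (x - 1), φ y) - ∫ y in (x - 1)..u, φ y) (-φ x) x :=
    (intervalIntegral.integral_hasDerivAt_right hInt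
      hc.stronglyMeasurable.stronglyMeasurableAtFilter hc.continuousAt).const_sub _
  refine hd.congr_of_eventuallyEq ?_
  filter_upwards [Ioi_mem_nhds (show x - 1 < x by linarith)] with u hu
  exact key u hu


theorem jacobiDeriv {n : ℕ} (M : ℝ → Matrix (Fin n) (Fin n) ℂ)
    (M' : Matrix (Fin n) (Fin n) ℂ) (x : ℝ)
    (h : ∀ i j, HasDerivAt (fun u => M u i j) (M' i j) x) :
    HasDerivAt (fun u => (M u).det) (Matrix.trace ((M x).adjugate * M')) x := by
  have key : HasDerivAt (fun u => (M u).det)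
      (∑ σ : Equiv.Perm (Fin n), ((Equiv.Perm.sign σ : ℤ) : ℂ) *
        ∑ i, (∏ j ∈ Finset.univ.erase i, M x (σ j) j) * M' (σ i) i) x := by
    simp only [Matrix.det_apply]
    apply HasDerivAt.fun_sum
    intro σ _
    have hp : HasDerivAt (fun u => ∏ i, M u (σ i) i)
        (∑ i, (∏ j ∈ Finset.univ.erase i, M x (σ j) j) • M' (σ i) i) x :=
      HasDerivAt.fun_finsetProd (fun i _ => h (σ i) i)
    have := hp.const_mul (((Equiv.Perm.sign σ : ℤ) : ℂ))
    convert this using 2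
    · rfl
    · simp [Units.smul_def, zsmul_eq_mul, smul_eq_mul, Finset.mul_sum]
    · simp [Units.smul_def, zsmul_eq_mul, smul_eq_mul, Finset.mul_sum]
  convert key using 1
  have h1 : ∀ i : Fin n, (Matrix.adjugate (M x) *ᵥ (fun r => M' r i)) i
      = ((M x).updateCol i (fun r => M' r i)).det := by
    intro i
    rw [← Matrix.cramer_eq_adjugate_mulVec, Matrix.cramer_apply]
  have h2 : Matrix.trace ((M x).adjugate * M')
      = ∑ i, ((M x).updateCol i (fun r => M' r i)).det := by
    rw [Matrix.trace]
    congr 1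
    ext i
    rw [← h1 i]
    simp [Matrix.mulVec, Matrix.mul_apply, Matrix.diag, dotProduct]
  rw [h2]
  simp only [Matrix.det_apply]
  rw [Finset.sum_comm]
  refine Finset.sum_congr rfl fun σ _ => ?_
  rw [Finset.mul_sum]
  refine Finset.sum_congr rfl fun i _ => ?_
  rw [← Finset.prod_erase_mul Finset.univ _ (Finset.mem_univ i)]
  have : ∀ j ∈ Finset.univ.erase i,
      (M x).updateCol i (fun r => M' r i) (σ j) j = M x (σ j) j := by
    intro j hj
    rw [Matrix.updateCol_apply, if_neg (Finset.mem_erase.mp hj).1]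
  rw [Finset.prod_congr rfl this, Matrix.updateCol_apply, if_pos rfl]
  simp [Units.smul_def, mul_assoc, mul_comm, mul_left_comm]

/-- With `A` an `n×n` stable matrix, `B` a column, `C` a row,
`R_x = ∫_x^∞ e^{-yA} B C e^{-yA} dy`, and
`T_λ(x,x) = −λ C e^{-xA} (I + λR_x)^{-1} e^{-xA} B` (with `I + λR_x` invertible on an
interval), one has `T_λ(x,x) = (d/dx) log det(I + λ R_x)`, i.e. the derivative of
`x ↦ det(I + λ R_x)` at `x` is `T_λ(x,x) · det(I + λ R_x)`. -/
theorem stmt14 (n : ℕ) (A : Matrix (Fin n) (Fin n) ℂ)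
    (B : Matrix (Fin n) (Fin 1) ℂ) (C : Matrix (Fin 1) (Fin n) ℂ)
    (hA : ∀ μ ∈ spectrum ℂ A, 0 < μ.re)
    (lam : ℂ) (a b : ℝ)
    (R : ℝ → Matrix (Fin n) (Fin n) ℂ)
    (hR : ∀ x : ℝ, R x = Matrix.of fun i j =>
        ∫ (y : ℝ) in Ioi x,
          (exp ((-(y : ℂ)) • A) * B * C * exp ((-(y : ℂ)) • A)) i j)
    (hinv : ∀ x ∈ Ioo a b, IsUnit (1 + lam • R x))
    (Tdiag : ℝ → ℂ)
    (hT : ∀ x : ℝ, Tdiag x =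
      -lam * (C * exp ((-(x : ℂ)) • A) * (1 + lam • R x)⁻¹ *
              exp ((-(x : ℂ)) • A) * B) 0 0) :
    ∀ x ∈ Ioo a b,
      HasDerivAt (fun u => (1 + lam • R u).det) (Tdiag x * (1 + lam • R x).det) x := by
  intro x hx
  set E : ℝ → Matrix (Fin n) (Fin n) ℂ := fun y => exp ((-(y : ℂ)) • A) with hE
  -- entrywise decay of E
  obtain ⟨δ, hδpos, hvO⟩ := expDecayVec A hA
  have hO : ∀ i j : Fin n, (fun y : ℝ => E y i j) =O[atTop]
      fun y => Real.exp (-δ * y) := by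
    intro i j
    refine (IsBigO.of_bound 1 ?_).trans (hvO (Pi.single j 1))
    filter_upwards with y
    rw [one_mul]
    have h1 : E y *ᵥ Pi.single j 1 = fun i => E y i j := by
      funext i
      simp [Matrix.mulVec_single]
    calc ‖E y i j‖ = ‖(E y *ᵥ Pi.single j 1) i‖ := by rw [h1]
      _ ≤ ‖E y *ᵥ Pi.single j 1‖ := norm_le_pi_norm _ i
  -- continuity of E
  have hEcont : Continuous E := by
    letI : SeminormedRing (Matrix (Fin n) (Fin n) ℂ) := Matrix.linftyOpSemiNormedRing
    letI : NormedRing (Matrix (Fin n) (Fin n) ℂ) := Matrix.linftyOpNormedRing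
    letI : NormedAlgebra ℂ (Matrix (Fin n) (Fin n) ℂ) := Matrix.linftyOpNormedAlgebra
    letI : NormedAlgebra ℚ (Matrix (Fin n) (Fin n) ℂ) := NormedAlgebra.restrictScalars ℚ ℂ _
    exact exp_continuous.comp ((Complex.continuous_ofReal.neg).smul continuous_const)
  -- entrywise derivative of R
  have hRd : ∀ i j : Fin n, HasDerivAt (fun u => R u i j)
      (-((E x * B * C * E x) i j)) x := by
    intro i j
    have hfun : (fun u => R u i j) = fun u => ∫ y in Ioi u, (E y * B * C * E y) i j := by
      funext u
      rw [hR u]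
      rfl
    rw [hfun]
    set φ : ℝ → ℂ := fun y => (E y * B * C * E y) i j with hφ
    have hφcont : Continuous φ := by
      apply Continuous.matrix_elem
      exact ((hEcont.matrix_mul continuous_const).matrix_mul continuous_const).matrix_mul hEcont
    have hφO : φ =O[atTop] fun y => Real.exp (-(2 * δ) * y) := by
      have hentry : φ = fun y => ∑ l, ∑ k, E y i k * (B * C) k l * E y l j := by
        funext y
        rw [hφ]
        simp only [Matrix.mul_assoc (E y) B C]
        simp [Matrix.mul_apply, Finset.sum_mul, mul_assoc]
      rw [hentry]
      apply IsBigO.fun_sum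
      intro l _
      apply IsBigO.fun_sum
      intro k _
      have h1 := ((hO i k).mul (hO l j)).const_mul_left ((B * C) k l)
      refine IsBigO.congr' h1 ?_ ?_
      · filter_upwards with y
        ring
      · filter_upwards with y
        rw [← Real.exp_add]
        congr 1
        ring
    have hφint : ∀ t : ℝ, IntegrableOn φ (Ioi t) :=
      integrableOn_of_bigO φ hφcont (by linarith) hφO
    exact hasDerivAt_integral_Ioi φ hφcont hφint x
  -- derivative of matrix entries of 1 + lam • R
  set M' : Matrix (Fin n) (Fin n) ℂ := (-lam) • (E x * B * C * E x) with hM'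
  have hMd : ∀ i j : Fin n, HasDerivAt (fun u => (1 + lam • R u) i j) (M' i j) x := by
    intro i j
    have h1 := ((hRd i j).const_mul lam).const_add ((1 : Matrix (Fin n) (Fin n) ℂ) i j)
    have h2 : (fun u => (1 + lam • R u) i j)
        = fun u => (1 : Matrix (Fin n) (Fin n) ℂ) i j + lam * R u i j := by
      funext u
      simp [Matrix.add_apply, Matrix.smul_apply, smul_eq_mul]
    rw [h2, hM']
    convert h1 using 1
    · rfl
    · show -lam * _ = _
      ring
  have hdet := jacobiDeriv (fun u => 1 + lam • R u) M' x hMd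
  convert hdet using 1
  -- the scalar identity
  set M : Matrix (Fin n) (Fin n) ℂ := 1 + lam • R x with hM
  have hu : IsUnit M := hinv x hx
  have hdu : IsUnit M.det := (Matrix.isUnit_iff_isUnit_det M).mp hu
  have hadj : M.adjugate = M.det • M⁻¹ := by
    rw [Matrix.inv_def, smul_smul, Ring.mul_inverse_cancel _ hdu, one_smul]
  rw [hT x, hadj]
  -- trace computation
  have hsplit : M' = (-lam) • ((E x * B) * (C * E x)) := by
    rw [hM']
    congr 1
    rw [Matrix.mul_assoc, Matrix.mul_assoc]
  rw [hsplit]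
  rw [Matrix.mul_smul, Matrix.trace_smul]
  have h3 : (M.det • M⁻¹) * ((E x * B) * (C * E x))
      = M.det • (M⁻¹ * ((E x * B) * (C * E x))) := Matrix.smul_mul _ _ _
  rw [h3, Matrix.trace_smul]
  have h4 : Matrix.trace (M⁻¹ * ((E x * B) * (C * E x)))
      = Matrix.trace ((C * E x) * (M⁻¹ * (E x * B))) := by
    rw [← Matrix.mul_assoc, Matrix.trace_mul_comm]
  rw [h4]
  have h5 : Matrix.trace ((C * E x) * (M⁻¹ * (E x * B)))
      = (C * E x * M⁻¹ * E x * B) 0 0 := by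
    rw [show (C * E x) * (M⁻¹ * (E x * B)) = C * E x * M⁻¹ * E x * B by
      simp only [Matrix.mul_assoc]]
    exact Matrix.trace_fin_one _
  rw [h5]
  simp only [smul_eq_mul]
  ring
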